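/- Let p_i = p for each i = 1,…,N and some p ∈ (0,1). Let 1 ≤ k, 1 ≤ n with k+n ≤ N. Then EXC = q_1 + q_2 + q_3 equals exactly EXC = (t_{k+n} − t_k) · (1−p)^{k−1} · (1 − (1−p)^n). -/

import Mathlib

open Finset

/-- `q_1 = T_{k−1}·Q_{k−1}·(p_{k+n} − p_k) + Q_{k−1}·(t_{k+n}·p_{k+n} − t_k·p_k)`. -/
noncomputable def q1 (p t : ℕ → ℝ) (k n : ℕ) : ℝ :=
  (∑ i ∈ Finset.Icc 1 (k - 1), t i) * (∏ i ∈ Finset.Icc 1 (k - 1), (1 - p i)) *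
      (p (k + n) - p k) +
    (∏ i ∈ Finset.Icc 1 (k - 1), (1 - p i)) * (t (k + n) * p (k + n) - t k * p k)

/-- `q_2 = Σ_{l=k+1}^{k+n−1} Q_{l−1}·p_l·(T_l·(p_k − p_{k+n})/(1 − p_k)
      + (t_{k+n} − t_k)·(1 − p_{k+n})/(1 − p_k))`. -/
noncomputable def q2 (p t : ℕ → ℝ) (k n : ℕ) : ℝ :=
  ∑ l ∈ Finset.Icc (k + 1) (k + n - 1),
    (∏ i ∈ Finset.Icc 1 (l - 1), (1 - p i)) * p l *
      ((∑ i ∈ Finset.Icc 1 l, t i) * (p k - p (k + n)) / (1 - p k) +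
        (t (k + n) - t k) * (1 - p (k + n)) / (1 - p k))

/-- `q_3 = T_{k+n}·Q_{k+n−1}·(p_k − p_{k+n})/(1 − p_k)`. -/
noncomputable def q3 (p t : ℕ → ℝ) (k n : ℕ) : ℝ :=
  (∑ i ∈ Finset.Icc 1 (k + n), t i) * (∏ i ∈ Finset.Icc 1 (k + n - 1), (1 - p i)) *
    (p k - p (k + n)) / (1 - p k)


/-- If all success probabilities are equal to some `p ∈ (0,1)`, then the excess expected
solving time `EXC = q_1 + q_2 + q_3` caused by interchanging the `k`-th and `(k+n)`-th
candidates equals exactly `EXC = (t_{k+n} − t_k)·(1−p)^{k−1}·(1 − (1−p)^n)`. -/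
theorem excess_equal_probabilities
    (N : ℕ) (hN : 1 ≤ N) (ps t : ℕ → ℝ) (p : ℝ)
    (hp : p ∈ Set.Ioo (0 : ℝ) 1)
    (hps : ∀ i ∈ Finset.Icc 1 N, ps i = p)
    (ht : ∀ i ∈ Finset.Icc 1 N, 0 < t i)
    (k n : ℕ) (hk : 1 ≤ k) (hn : 1 ≤ n) (hkn : k + n ≤ N) :
    q1 ps t k n + q2 ps t k n + q3 ps t k n =
      (t (k + n) - t k) * (1 - p) ^ (k - 1) * (1 - (1 - p) ^ n) := by

  obtain ⟨hp0, hp1⟩ := hp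
  have hx : (1:ℝ) - p ≠ 0 := by linarith
  have hprod : ∀ m, m ≤ N → (∏ i ∈ Finset.Icc 1 m, (1 - ps i)) = (1 - p) ^ m := by
    intro m hm
    rw [Finset.prod_congr rfl (fun i hi => by
      rw [hps i (Finset.mem_Icc.mpr ⟨(Finset.mem_Icc.mp hi).1,
        le_trans (Finset.mem_Icc.mp hi).2 hm⟩)]), Finset.prod_const, Nat.card_Icc]
    simp
  have hpsk : ps k = p := hps k (Finset.mem_Icc.mpr ⟨hk, by omega⟩)
  have hpskn : ps (k+n) = p := hps (k+n) (Finset.mem_Icc.mpr ⟨by omega, hkn⟩)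
  have hq1 : q1 ps t k n = (1-p)^(k-1) * (t (k+n) - t k) * p := by
    rw [q1, hpsk, hpskn, hprod (k-1) (by omega)]
    ring
  have hq3 : q3 ps t k n = 0 := by
    rw [q3, hpsk, hpskn]
    ring
  have hq2 : q2 ps t k n =
      (∑ l ∈ Finset.Icc (k+1) (k+n-1), (1-p)^(l-1) * p) * (t (k+n) - t k) := by
    rw [q2, Finset.sum_mul]
    apply Finset.sum_congr rfl
    intro l hl
    obtain ⟨hl1, hl2⟩ := Finset.mem_Icc.mp hl
    rw [hpsk, hpskn, hprod (l-1) (by omega),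
      hps l (Finset.mem_Icc.mpr ⟨by omega, by omega⟩)]
    field_simp
    ring
  have key : ∀ m, 1 ≤ m →
      ((1-p)^(k-1) * p + ∑ l ∈ Finset.Icc (k+1) (k+m-1), (1-p)^(l-1) * p)
        = (1-p)^(k-1) * (1 - (1-p)^m) := by
    intro m hm
    induction m with
    | zero => omega
    | succ m ih =>
      rcases Nat.lt_or_ge m 1 with h1 | h1
      · have : m = 0 := by omega
        subst this
        simp
      · have heq : k + (m+1) - 1 = (k + m - 1) + 1 := by omega
        rw [heq, Finset.sum_Icc_succ_top (by omega : k+1 ≤ k+m-1+1), ← add_assoc, ih h1]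
        have h2 : k + m - 1 + 1 - 1 = (k-1) + m := by omega
        rw [h2, pow_add, pow_succ]
        ring
  rw [hq1, hq2, hq3]
  linear_combination (t (k+n) - t k) * key n hn
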